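/- Assume SSN_ℓ ~ (sqrt(2·e^{5/8})/4)·ℓ^{-1}·(8/e²)^ℓ·ℓ^{2ℓ} and SN_ℓ ~ (sqrt(2·e^{1/2})/4)·ℓ^{-1}·(8/e²)^ℓ·ℓ^{2ℓ} as ℓ → ∞. Then ∑_{j=1}^n C(n,j)·SN_j / ∑_{j=1}^n C(n,j)·SSN_j → e^{-1/16} as n → ∞. -/

import Mathlib

open Filter Real

section Auxiliary

open Finset

/-- The common growth scale `ℓ⁻¹ (8/e²)^ℓ ℓ^{2ℓ}` (without the constant factor). -/
noncomputable def gg (ℓ : ℕ) : ℝ :=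
  (ℓ : ℝ)⁻¹ * (8 / Real.exp 1 ^ 2) ^ ℓ * (ℓ : ℝ) ^ (2 * ℓ)

lemma gg_pos {ℓ : ℕ} (h : 1 ≤ ℓ) : 0 < gg ℓ := by
  have hℓ : (0:ℝ) < (ℓ:ℝ) := by exact_mod_cast h
  have h8 : (0:ℝ) < 8 / Real.exp 1 ^ 2 := by positivity
  exact mul_pos (mul_pos (inv_pos.mpr hℓ) (pow_pos h8 _)) (pow_pos hℓ _)

lemma key_ineq {j k : ℕ} (hj : 1 ≤ j) (hk : 1 ≤ k) :
    (((j+k).choose j : ℕ) : ℝ) * gg j ≤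
      (Real.exp 1 ^ 3 / (8 * ((j+k : ℕ) : ℝ))) ^ k * gg (j+k) := by
  obtain ⟨E, hE, hEpos⟩ : ∃ E : ℝ, Real.exp 1 = E ∧ 0 < E := ⟨_, rfl, Real.exp_pos 1⟩
  unfold gg
  rw [hE]
  obtain ⟨i, rfl⟩ : ∃ i, j = i + 1 := ⟨j - 1, by omega⟩
  set j := i + 1 with hjdef
  have hjpos : (0:ℝ) < (j:ℝ) := by positivity
  set N : ℝ := ((j + k : ℕ) : ℝ) with hN
  have hNval : N = (j:ℝ) + (k:ℝ) := by rw [hN]; push_cast; ring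
  have hkpos : (0:ℝ) ≤ (k:ℝ) := by positivity
  have hNpos : (0:ℝ) < N := by rw [hNval]; positivity
  have hjN : (j:ℝ) ≤ N := by rw [hNval]; linarith
  set r : ℝ := 8 / E ^ 2 with hr
  have hrpos : 0 < r := by rw [hr]; positivity
  have hC : (((j+k).choose j : ℕ) : ℝ) ≤ N ^ k := by
    rw [hN]
    calc (((j+k).choose j : ℕ) : ℝ) = (((j+k).choose k : ℕ) : ℝ) := by
          rw [Nat.choose_symm_add]
      _ ≤ (((j+k)^k : ℕ) : ℝ) := by exact_mod_cast Nat.choose_le_pow (j+k) k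
      _ = ((j+k : ℕ) : ℝ) ^ k := by push_cast; ring
  have hggj : (0:ℝ) < (j:ℝ)⁻¹ * r ^ j * (j:ℝ) ^ (2*j) := by positivity
  calc (((j+k).choose j : ℕ) : ℝ) * ((j:ℝ)⁻¹ * r ^ j * (j:ℝ) ^ (2*j))
      ≤ N ^ k * ((j:ℝ)⁻¹ * r ^ j * (j:ℝ) ^ (2*j)) :=
        mul_le_mul_of_nonneg_right hC hggj.le
    _ ≤ (E ^ 3 / (8 * N)) ^ k * (N⁻¹ * r ^ (j+k) * N ^ (2*(j+k))) := by
        have lhs_eq : N ^ k * ((j:ℝ)⁻¹ * r ^ j * (j:ℝ) ^ (2*j))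
            = (N ^ k * r ^ j * (j:ℝ) ^ (2*j)) / (j:ℝ) := by
          field_simp
        have rhs_eq : (E ^ 3 / (8 * N)) ^ k * (N⁻¹ * r ^ (j+k) * N ^ (2*(j+k)))
            = (E ^ k * r ^ j * N ^ (2*(j+k))) / N ^ (k+1) := by
          rw [hr]
          clear_value N
          rw [eq_div_iff (by positivity), div_pow, mul_pow, div_pow, div_pow, pow_add (8:ℝ), pow_add (E^2)]
          field_simp
          ring
        rw [lhs_eq, rhs_eq]
        rw [div_le_div_iff₀ hjpos (pow_pos hNpos _)]
        have hpow : (j:ℝ) ^ (2*j) * N ≤ N ^ (2*j) * (j:ℝ) := by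
          have h1 : (j:ℝ) ^ (2*i+1) ≤ N ^ (2*i+1) :=
            pow_le_pow_left₀ hjpos.le hjN _
          calc (j:ℝ) ^ (2*j) * N = (j:ℝ) ^ (2*i+1) * ((j:ℝ) * N) := by
                rw [hjdef]; ring
            _ ≤ N ^ (2*i+1) * ((j:ℝ) * N) :=
                mul_le_mul_of_nonneg_right h1 (by positivity)
            _ = N ^ (2*j) * (j:ℝ) := by rw [hjdef]; ring
        have hek : (1:ℝ) ≤ E ^ k :=
          one_le_pow₀ (by rw [← hE]; exact Real.one_le_exp (by norm_num))
        calc N ^ k * r ^ j * (j:ℝ) ^ (2*j) * N ^ (k+1)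
            = (r ^ j * N ^ (2*k)) * ((j:ℝ) ^ (2*j) * N) := by ring
          _ ≤ (r ^ j * N ^ (2*k)) * (N ^ (2*j) * (j:ℝ)) :=
              mul_le_mul_of_nonneg_left hpow (by positivity)
          _ = 1 * (r ^ j * N ^ (2*(j+k)) * (j:ℝ)) := by ring
          _ ≤ E ^ k * (r ^ j * N ^ (2*(j+k)) * (j:ℝ)) :=
              mul_le_mul_of_nonneg_right hek (by positivity)
          _ = E ^ k * r ^ j * N ^ (2*(j+k)) * (j:ℝ) := by ring

lemma sum_pow_bound {x : ℝ} (hx0 : 0 ≤ x) (hx2 : x ≤ 1/2) (n : ℕ) :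
    ∑ j ∈ Icc 1 (n-1), x ^ (n-j) ≤ 2 * x := by
  rcases Nat.lt_or_ge n 2 with hn | hn
  · interval_cases n <;> simp [hx0] <;> linarith
  · have e1 : Icc 1 (n-1) = Ico 1 n := by
      rw [← Finset.Ico_add_one_right_eq_Icc]
      congr 1
      omega
    rw [e1, Finset.sum_Ico_eq_sum_range]
    have e2 : ∀ i ∈ Finset.range (n-1), x ^ (n - (1+i)) = (fun t => x ^ (t+1)) ((n-1) - 1 - i) := by
      intro i hi
      simp only [Finset.mem_range] at hi
      congr 1
      omega
    rw [Finset.sum_congr rfl e2, Finset.sum_range_reflect (fun t => x ^ (t+1)) (n-1)]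
    have e3 : ∀ i ∈ Finset.range (n-1), x ^ (i+1) = x * x ^ i := by
      intro i _; rw [pow_succ]; ring
    rw [Finset.sum_congr rfl e3, ← Finset.mul_sum]
    have h4 : ∑ i ∈ Finset.range (n-1), x ^ i ≤ 2 := by
      calc ∑ i ∈ Finset.range (n-1), x ^ i ≤ ∑ i ∈ Finset.range (n-1), (1/2:ℝ) ^ i := by
            apply Finset.sum_le_sum
            intro i _
            exact pow_le_pow_left₀ hx0 hx2 i
        _ ≤ 2 := sum_geometric_two_le _
    calc x * ∑ i ∈ Finset.range (n-1), x ^ i ≤ x * 2 :=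
          mul_le_mul_of_nonneg_left h4 hx0
      _ = 2 * x := by ring

lemma sum_bound {n : ℕ} (hn : 6 ≤ n) :
    ∑ j ∈ Icc 1 (n-1), ((n.choose j : ℕ) : ℝ) * gg j
      ≤ (Real.exp 1 ^ 3 / (4 * (n:ℝ))) * gg n := by
  have hnpos : (0:ℝ) < (n:ℝ) := by positivity
  set x : ℝ := Real.exp 1 ^ 3 / (8 * (n:ℝ)) with hx
  have hx0 : 0 ≤ x := by positivity
  have hx2 : x ≤ 1/2 := by
    rw [hx, div_le_div_iff₀ (by positivity) (by norm_num)]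
    have he : Real.exp 1 < 2.7182818286 := Real.exp_one_lt_d9
    have hn' : (6:ℝ) ≤ (n:ℝ) := by exact_mod_cast hn
    have h3 : Real.exp 1 ^ 3 < 2.7182818286 ^ 3 :=
      pow_lt_pow_left₀ he (Real.exp_pos 1).le (by norm_num)
    nlinarith [h3]
  have hterm : ∀ j ∈ Icc 1 (n-1), ((n.choose j : ℕ) : ℝ) * gg j ≤ x ^ (n-j) * gg n := by
    intro j hj
    rw [Finset.mem_Icc] at hj
    obtain ⟨k, hk1, hkn⟩ : ∃ k, 1 ≤ k ∧ j + k = n := ⟨n - j, by omega, by omega⟩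
    have h := key_ineq (j := j) (k := k) hj.1 hk1
    rw [hkn] at h
    rwa [show n - j = k by omega, hx]
  calc ∑ j ∈ Icc 1 (n-1), ((n.choose j : ℕ) : ℝ) * gg j
      ≤ ∑ j ∈ Icc 1 (n-1), x ^ (n-j) * gg n := Finset.sum_le_sum hterm
    _ = (∑ j ∈ Icc 1 (n-1), x ^ (n-j)) * gg n := by rw [Finset.sum_mul]
    _ ≤ (2 * x) * gg n :=
        mul_le_mul_of_nonneg_right (sum_pow_bound hx0 hx2 n) (gg_pos (by omega)).le
    _ = (Real.exp 1 ^ 3 / (4 * (n:ℝ))) * gg n := by rw [hx]; ring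

lemma lemA (b : ℕ → ℝ) (c : ℝ) (hc : 0 < c)
    (hb : Tendsto (fun ℓ : ℕ => b ℓ / (c * gg ℓ)) atTop (nhds 1)) :
    Tendsto (fun n : ℕ => (∑ j ∈ Icc 1 n, (n.choose j : ℝ) * b j) / gg n)
      atTop (nhds c) := by
  -- uniform bound `|b j| ≤ M * gg j` for `j ≥ 1`
  obtain ⟨N₀, hN₀⟩ := Metric.tendsto_atTop.mp hb 1 one_pos
  have hBB : ∀ ℓ, N₀ ≤ ℓ → 1 ≤ ℓ → |b ℓ| ≤ 2 * c * gg ℓ := by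
    intro ℓ h1 h2
    have hg := gg_pos h2
    have hcg : 0 < c * gg ℓ := mul_pos hc hg
    have := hN₀ ℓ h1
    rw [Real.dist_eq] at this
    have habs : |b ℓ / (c * gg ℓ)| < 2 := by
      have := abs_sub_abs_le_abs_sub (b ℓ / (c * gg ℓ)) 1
      simp only [abs_one] at this
      linarith
    rw [abs_div, abs_of_pos hcg, div_lt_iff₀ hcg] at habs
    linarith
  set M : ℝ := 2 * c + ∑ j ∈ Icc 1 N₀, |b j| / gg j with hM
  have hsumnn : 0 ≤ ∑ j ∈ Icc 1 N₀, |b j| / gg j :=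
    Finset.sum_nonneg fun j hj =>
      div_nonneg (abs_nonneg _) (gg_pos (Finset.mem_Icc.mp hj).1).le
  have hM0 : 0 ≤ M := by rw [hM]; positivity
  have hMb : ∀ j, 1 ≤ j → |b j| ≤ M * gg j := by
    intro j hj
    have hg := gg_pos hj
    rcases le_or_gt j N₀ with h | h
    · have hmem : j ∈ Icc 1 N₀ := Finset.mem_Icc.mpr ⟨hj, h⟩
      have hsingle : |b j| / gg j ≤ ∑ i ∈ Icc 1 N₀, |b i| / gg i :=
        Finset.single_le_sum (f := fun i => |b i| / gg i)
          (fun i hi => div_nonneg (abs_nonneg _) (gg_pos (Finset.mem_Icc.mp hi).1).le) hmem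
      have : |b j| / gg j ≤ M := by rw [hM]; nlinarith
      exact (div_le_iff₀ hg).mp this
    · have h1 := hBB j h.le hj
      have : 2 * c ≤ M := by rw [hM]; linarith
      nlinarith
  -- the remainder (all but the top term) tends to zero
  have hR : Tendsto (fun n : ℕ =>
      (∑ j ∈ Icc 1 (n-1), (n.choose j : ℝ) * b j) / gg n) atTop (nhds 0) := by
    apply squeeze_zero_norm'
      (a := fun n : ℕ => M * (Real.exp 1 ^ 3 / (4 * (n:ℝ))))
    · filter_upwards [eventually_ge_atTop 6] with n hn
      have hgn := gg_pos (show 1 ≤ n by omega)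
      rw [Real.norm_eq_abs, abs_div, abs_of_pos hgn, div_le_iff₀ hgn]
      calc |∑ j ∈ Icc 1 (n-1), (n.choose j : ℝ) * b j|
          ≤ ∑ j ∈ Icc 1 (n-1), |(n.choose j : ℝ) * b j| :=
            Finset.abs_sum_le_sum_abs _ _
        _ ≤ ∑ j ∈ Icc 1 (n-1), (n.choose j : ℝ) * (M * gg j) := by
            apply Finset.sum_le_sum
            intro j hj
            rw [abs_mul, abs_of_nonneg (by positivity : (0:ℝ) ≤ (n.choose j : ℝ))]
            exact mul_le_mul_of_nonneg_left
              (hMb j (Finset.mem_Icc.mp hj).1) (by positivity)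
        _ = M * ∑ j ∈ Icc 1 (n-1), (n.choose j : ℝ) * gg j := by
            rw [Finset.mul_sum]
            exact Finset.sum_congr rfl fun j _ => by ring
        _ ≤ M * ((Real.exp 1 ^ 3 / (4 * (n:ℝ))) * gg n) :=
            mul_le_mul_of_nonneg_left (sum_bound hn) hM0
        _ = M * (Real.exp 1 ^ 3 / (4 * (n:ℝ))) * gg n := by ring
    · have heq : (fun n : ℕ => M * (Real.exp 1 ^ 3 / (4 * (n:ℝ))))
          = fun n : ℕ => (M * Real.exp 1 ^ 3 / 4) / (n:ℝ) := by
        funext n; ring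
      rw [heq]
      exact tendsto_const_div_atTop_nhds_zero_nat _
  have hmain : Tendsto (fun n : ℕ =>
      c * (b n / (c * gg n)) +
        (∑ j ∈ Icc 1 (n-1), (n.choose j : ℝ) * b j) / gg n) atTop (nhds c) := by
    have h := (hb.const_mul c).add hR
    simpa using h
  apply hmain.congr'
  filter_upwards [eventually_ge_atTop 1] with n hn
  obtain ⟨m, rfl⟩ : ∃ m, n = m + 1 := ⟨n - 1, by omega⟩
  have hgn := gg_pos (show 1 ≤ m + 1 by omega)
  rw [Finset.sum_Icc_succ_top (by omega : 1 ≤ m + 1)]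
  rw [Nat.choose_self]
  simp only [Nat.add_sub_cancel, Nat.cast_one, one_mul]
  rw [add_div, add_comm]
  congr 1
  field_simp

end Auxiliary

/- STATEMENT 19 (Proposition 3): Given SSN_ℓ ~ (sqrt(2·e^{5/8})/4)·ℓ⁻¹·(8/e²)^ℓ·ℓ^{2ℓ}
(semi-simplicial networks) and SN_ℓ ~ (sqrt(2·e^{1/2})/4)·ℓ⁻¹·(8/e²)^ℓ·ℓ^{2ℓ}
(simplicial networks), the ratio of the counts over leaf sets that are arbitrary nonempty
subsets of [n] tends to e^{-1/16}. -/
theorem simplicial_over_semisimplicial_limit (SSN SN : ℕ → ℝ)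
    (hSSN : Tendsto (fun ℓ : ℕ => SSN ℓ /
        (Real.sqrt (2 * Real.exp (5/8)) / 4 * (ℓ : ℝ)⁻¹ *
          (8 / Real.exp 1 ^ 2) ^ ℓ * (ℓ : ℝ) ^ (2 * ℓ))) atTop (nhds 1))
    (hSN : Tendsto (fun ℓ : ℕ => SN ℓ /
        (Real.sqrt (2 * Real.exp (1/2)) / 4 * (ℓ : ℝ)⁻¹ *
          (8 / Real.exp 1 ^ 2) ^ ℓ * (ℓ : ℝ) ^ (2 * ℓ))) atTop (nhds 1)) :
    Tendsto (fun n : ℕ =>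
        (∑ j ∈ Finset.Icc 1 n, (n.choose j : ℝ) * SN j) /
        (∑ j ∈ Finset.Icc 1 n, (n.choose j : ℝ) * SSN j))
      atTop (nhds (Real.exp (-(1/16)))) := by
  set c₁ : ℝ := Real.sqrt (2 * Real.exp (5/8)) / 4 with hc₁def
  set c₂ : ℝ := Real.sqrt (2 * Real.exp (1/2)) / 4 with hc₂def
  have hc₁ : 0 < c₁ := by
    rw [hc₁def]
    have : 0 < Real.sqrt (2 * Real.exp (5/8)) :=
      Real.sqrt_pos.mpr (by positivity)
    linarith
  have hc₂ : 0 < c₂ := by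
    rw [hc₂def]
    have : 0 < Real.sqrt (2 * Real.exp (1/2)) :=
      Real.sqrt_pos.mpr (by positivity)
    linarith
  have hSSN' : Tendsto (fun ℓ : ℕ => SSN ℓ / (c₁ * gg ℓ)) atTop (nhds 1) := by
    have heq : (fun ℓ : ℕ => SSN ℓ / (c₁ * gg ℓ))
        = fun ℓ : ℕ => SSN ℓ /
            (Real.sqrt (2 * Real.exp (5/8)) / 4 * (ℓ : ℝ)⁻¹ *
              (8 / Real.exp 1 ^ 2) ^ ℓ * (ℓ : ℝ) ^ (2 * ℓ)) := by
      funext ℓ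
      rw [hc₁def]
      unfold gg
      ring_nf
    rw [heq]
    exact hSSN
  have hSN' : Tendsto (fun ℓ : ℕ => SN ℓ / (c₂ * gg ℓ)) atTop (nhds 1) := by
    have heq : (fun ℓ : ℕ => SN ℓ / (c₂ * gg ℓ))
        = fun ℓ : ℕ => SN ℓ /
            (Real.sqrt (2 * Real.exp (1/2)) / 4 * (ℓ : ℝ)⁻¹ *
              (8 / Real.exp 1 ^ 2) ^ ℓ * (ℓ : ℝ) ^ (2 * ℓ)) := by
      funext ℓ
      rw [hc₂def]
      unfold gg
      ring_nf
    rw [heq]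
    exact hSN
  have H1 := lemA SSN c₁ hc₁ hSSN'
  have H2 := lemA SN c₂ hc₂ hSN'
  have H := H2.div H1 hc₁.ne'
  have hconst : c₂ / c₁ = Real.exp (-(1/16)) := by
    rw [hc₁def, hc₂def]
    rw [div_div_div_cancel_right₀ (by norm_num : (4:ℝ) ≠ 0)]
    rw [← Real.sqrt_div (by positivity)]
    rw [show (2 * Real.exp (1/2)) / (2 * Real.exp (5/8)) = Real.exp (-(1/8)) by
      rw [mul_div_mul_left _ _ (two_ne_zero), ← Real.exp_sub]
      norm_num]
    rw [← Real.exp_half]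
    norm_num
  rw [hconst] at H
  apply H.congr'
  filter_upwards [eventually_ge_atTop 1] with n hn
  exact div_div_div_cancel_right₀ (gg_pos hn).ne' _ _
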